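/- (Point-mass limit, one-dimensional case of Corollary, part i.) For every θ_s ∈ ℝ and every bounded continuous 2π-periodic function g : ℝ → ℝ, the WOU conditional density concentrates at θ_s as t → 0⁺: ∫_{−π}^{π} p_t(θ | θ_s)·g(θ) dθ → g(θ_s) as t → 0⁺. -/

import Mathlib

open MeasureTheory Real

/-- Centered Gaussian density with variance `v` on `ℝ`. -/
noncomputable def gaussDens (v x : ℝ) : ℝ :=
  (Real.sqrt (2 * Real.pi * v))⁻¹ * Real.exp (-(x ^ 2) / (2 * v))

/-- Wrapped normal density `f_WN(θ; μ, v)`. -/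
noncomputable def fWN (μ v θ : ℝ) : ℝ :=
  ∑' k : ℤ, gaussDens v (θ - μ + 2 * (k : ℝ) * Real.pi)

/-- Winding-number weights `w_k(θ)` with stationary variance `v∞ = σ²/(2α)`. -/
noncomputable def wnWeight (α μ σ : ℝ) (k : ℤ) (θ : ℝ) : ℝ :=
  gaussDens (σ ^ 2 / (2 * α)) (θ - μ + 2 * (k : ℝ) * Real.pi) / fWN μ (σ ^ 2 / (2 * α)) θ

/-- Conditional mean `μ_t^m(θ_s) = μ + e^{−αt}(θ_s − μ + 2mπ)`. -/
noncomputable def wouMean (α μ : ℝ) (t : ℝ) (m : ℤ) (θs : ℝ) : ℝ :=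
  μ + Real.exp (-(α * t)) * (θs - μ + 2 * (m : ℝ) * Real.pi)

/-- Conditional variance `γ_t = σ²(1 − e^{−2αt})/(2α)`. -/
noncomputable def wouVar (α σ t : ℝ) : ℝ :=
  σ ^ 2 * (1 - Real.exp (-(2 * α * t))) / (2 * α)

/-- The WOU conditional density `p_t(θ | θ_s)`. -/
noncomputable def pWOU (α μ σ t θ θs : ℝ) : ℝ :=
  ∑' m : ℤ, wnWeight α μ σ m θs * fWN (wouMean α μ t m θs) (wouVar α σ t) θ

open Filter Set

lemma gaussDens_nonneg (v x : ℝ) : 0 ≤ gaussDens v x := by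
  unfold gaussDens; positivity

lemma gaussDens_pos {v : ℝ} (hv : 0 < v) (x : ℝ) : 0 < gaussDens v x :=
  mul_pos (inv_pos.2 (Real.sqrt_pos.2 (by positivity))) (Real.exp_pos _)

lemma continuous_gaussDens (v : ℝ) : Continuous (gaussDens v) := by
  unfold gaussDens; fun_prop

lemma integrable_gaussDens {v : ℝ} (hv : 0 < v) : Integrable (gaussDens v) := by
  have h : gaussDens v = fun x => (Real.sqrt (2 * Real.pi * v))⁻¹ *
      Real.exp (-(1/(2*v)) * x ^ 2) := by
    funext x; unfold gaussDens; ring_nf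
  rw [h]
  exact (integrable_exp_neg_mul_sq (by positivity)).const_mul _

lemma integral_gaussDens {v : ℝ} (hv : 0 < v) : ∫ x : ℝ, gaussDens v x = 1 := by
  have h : ∀ x : ℝ, gaussDens v x = (Real.sqrt (2 * Real.pi * v))⁻¹ *
      Real.exp (-(1/(2*v)) * x ^ 2) := fun x => by unfold gaussDens; ring_nf
  simp_rw [h]
  rw [MeasureTheory.integral_const_mul, integral_gaussian]
  have h2 : Real.pi / (1/(2*v)) = 2 * Real.pi * v := by field_simp
  rw [h2, inv_mul_cancel₀ (Real.sqrt_pos.2 (by positivity)).ne']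

lemma summable_exp_neg_abs_int : Summable (fun k : ℤ => Real.exp (-|(k : ℝ)|)) := by
  apply Summable.of_nat_of_neg
  · simpa [abs_of_nonneg] using Real.summable_exp_neg_nat
  · simpa [abs_of_nonpos] using Real.summable_exp_neg_nat

lemma gaussDens_exp_bound {v : ℝ} (hv : 0 < v) (y : ℝ) :
    gaussDens v y ≤ (Real.sqrt (2 * Real.pi * v))⁻¹ * Real.exp (v/2 - |y|) := by
  unfold gaussDens
  apply mul_le_mul_of_nonneg_left _ (by positivity)
  apply Real.exp_le_exp.2
  rw [neg_div, neg_le, neg_sub, le_div_iff₀ (by positivity : (0:ℝ) < 2*v)]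
  nlinarith [sq_nonneg (|y| - v), sq_abs y, abs_nonneg y]

lemma gaussDens_le {v : ℝ} (hv : 0 < v) (x : ℝ) (k : ℤ) :
    gaussDens v (x + 2 * (k : ℝ) * Real.pi) ≤
      (Real.sqrt (2 * Real.pi * v))⁻¹ * Real.exp (v/2 + |x|) * Real.exp (-|(k : ℝ)|) := by
  refine (gaussDens_exp_bound hv _).trans ?_
  rw [mul_assoc ((Real.sqrt (2 * Real.pi * v))⁻¹), ← Real.exp_add]
  apply mul_le_mul_of_nonneg_left _ (by positivity)
  apply Real.exp_le_exp.2
  have ha : |2 * (k : ℝ) * Real.pi| ≤ |x + 2 * (k : ℝ) * Real.pi| + |x| := by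
    calc |2 * (k : ℝ) * Real.pi| = |x + 2 * (k : ℝ) * Real.pi + (-x)| := by ring_nf
      _ ≤ |x + 2 * (k : ℝ) * Real.pi| + |(-x)| := abs_add_le _ _
      _ = |x + 2 * (k : ℝ) * Real.pi| + |x| := by rw [abs_neg]
  have hb : |2 * (k : ℝ) * Real.pi| = 2 * Real.pi * |(k : ℝ)| := by
    rw [abs_mul, abs_mul, abs_of_nonneg Real.pi_pos.le,
      abs_of_nonneg (by norm_num : (0:ℝ) ≤ 2)]
    ring
  have h3 : |(k : ℝ)| ≤ 2 * Real.pi * |(k : ℝ)| := by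
    nlinarith [abs_nonneg (k : ℝ), Real.pi_gt_three]
  rw [hb] at ha
  linarith

lemma summable_gaussDens_int {v : ℝ} (hv : 0 < v) (x : ℝ) :
    Summable (fun k : ℤ => gaussDens v (x + 2 * (k : ℝ) * Real.pi)) :=
  Summable.of_nonneg_of_le (fun k => gaussDens_nonneg _ _) (fun k => gaussDens_le hv x k)
    (summable_exp_neg_abs_int.mul_left _)

lemma fWN_nonneg (μ v θ : ℝ) : 0 ≤ fWN μ v θ :=
  tsum_nonneg fun k => gaussDens_nonneg _ _

lemma fWN_pos {v : ℝ} (hv : 0 < v) (μ θ : ℝ) : 0 < fWN μ v θ :=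
  Summable.tsum_pos (summable_gaussDens_int hv _) (fun k => gaussDens_nonneg _ _) 0
    (gaussDens_pos hv _)

lemma fWN_le {v : ℝ} (hv : 0 < v) (μ θ : ℝ) :
    fWN μ v θ ≤ (Real.sqrt (2 * Real.pi * v))⁻¹ * Real.exp (v/2 + |θ - μ|) *
      ∑' k : ℤ, Real.exp (-|(k : ℝ)|) := by
  rw [← tsum_mul_left]
  exact Summable.tsum_le_tsum (fun k => gaussDens_le hv (θ - μ) k) (summable_gaussDens_int hv _)
    (summable_exp_neg_abs_int.mul_left _)

lemma measurable_fWN {v : ℝ} (hv : 0 < v) (μ : ℝ) : Measurable (fWN μ v) := by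
  have h : fWN μ v = fun θ =>
      (∑' k : ℤ, ENNReal.ofReal (gaussDens v (θ - μ + 2 * (k : ℝ) * Real.pi))).toReal := by
    funext θ
    rw [← ENNReal.ofReal_tsum_of_nonneg (fun k => gaussDens_nonneg _ _)
      (summable_gaussDens_int hv _),
      ENNReal.toReal_ofReal (tsum_nonneg fun k => gaussDens_nonneg _ _)]
    rfl
  rw [h]
  apply Measurable.ennreal_toReal
  apply Measurable.ennreal_tsum
  intro k
  exact ((continuous_gaussDens v).measurable.comp (by fun_prop)).ennreal_ofReal

lemma wnWeight_nonneg {α σ : ℝ} (hα : 0 < α) (hσ : 0 < σ) (μ : ℝ) (k : ℤ) (θ : ℝ) :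
    0 ≤ wnWeight α μ σ k θ :=
  div_nonneg (gaussDens_nonneg _ _) (fWN_nonneg _ _ _)

lemma summable_wnWeight {α σ : ℝ} (hα : 0 < α) (hσ : 0 < σ) (μ θ : ℝ) :
    Summable (fun k : ℤ => wnWeight α μ σ k θ) :=
  (summable_gaussDens_int (by positivity) _).div_const _

lemma tsum_wnWeight {α σ : ℝ} (hα : 0 < α) (hσ : 0 < σ) (μ θ : ℝ) :
    ∑' k : ℤ, wnWeight α μ σ k θ = 1 := by
  unfold wnWeight
  rw [tsum_div_const]
  exact div_self (fWN_pos (by positivity) μ θ).ne'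

lemma gauss_scale {v : ℝ} (hv : 0 < v) (z : ℝ) :
    Real.sqrt v * gaussDens v (Real.sqrt v * z) = gaussDens 1 z := by
  unfold gaussDens
  have h1 : (Real.sqrt v * z) ^ 2 = v * z ^ 2 := by
    rw [mul_pow, Real.sq_sqrt hv.le]
  have h2 : -(v * z ^ 2) / (2 * v) = -(z ^ 2) / (2 * 1) := by
    field_simp
  have h3 : Real.sqrt (2 * Real.pi * v) = Real.sqrt (2 * Real.pi * 1) * Real.sqrt v := by
    rw [← Real.sqrt_mul (by positivity)]
    ring_nf
  rw [h1, h2, h3]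
  have hsv : (0:ℝ) < Real.sqrt v := Real.sqrt_pos.2 hv
  field_simp

/-- Scaling step: gaussian integral against `g` as integral against standard gaussian. -/
lemma gauss_integral_scale {v : ℝ} (hv : 0 < v) (m' : ℝ) (g : ℝ → ℝ) :
    ∫ x : ℝ, gaussDens v (x - m') * g x
      = ∫ z : ℝ, gaussDens 1 z * g (m' + Real.sqrt v * z) := by
  have hsv : (0:ℝ) < Real.sqrt v := Real.sqrt_pos.2 hv
  have e1 : (∫ x : ℝ, gaussDens v (x - m') * g x)
      = ∫ x : ℝ, gaussDens v x * g (x + m') := by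
    rw [← integral_add_right_eq_self (fun x => gaussDens v (x - m') * g x) m']
    simp only [add_sub_cancel_right]
  have e2 := MeasureTheory.Measure.integral_comp_mul_left
    (fun x => gaussDens v x * g (x + m')) (Real.sqrt v)
  rw [e1]
  have habs : |(Real.sqrt v)⁻¹| = (Real.sqrt v)⁻¹ := abs_of_pos (by positivity)
  rw [habs, smul_eq_mul] at e2
  have e3 : (∫ x : ℝ, gaussDens v x * g (x + m'))
      = Real.sqrt v * ∫ x : ℝ, gaussDens v (Real.sqrt v * x) * g (Real.sqrt v * x + m') := by
    rw [e2, ← mul_assoc, mul_inv_cancel₀ hsv.ne', one_mul]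
  rw [e3, ← MeasureTheory.integral_const_mul]
  congr 1
  funext z
  rw [← mul_assoc, gauss_scale hv, add_comm (Real.sqrt v * z) m']

lemma fWN_integral_eq {v : ℝ} (hv : 0 < v) (m' : ℝ) (g : ℝ → ℝ) (hg_cont : Continuous g)
    (C : ℝ) (hC : ∀ x, |g x| ≤ C) (hg_per : Function.Periodic g (2 * Real.pi)) :
    ∫ θ in Ioc (-Real.pi) Real.pi, fWN m' v θ * g θ
      = ∫ z : ℝ, gaussDens 1 z * g (m' + Real.sqrt v * z) := by
  have hC0 : 0 ≤ C := (abs_nonneg _).trans (hC 0)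
  have hgm : Integrable (fun x : ℝ => gaussDens v (x - m')) :=
    (integrable_gaussDens hv).comp_sub_right m'
  have hh : Integrable (fun x : ℝ => gaussDens v (x - m') * g x) := by
    have := hgm.bdd_mul hg_cont.aestronglyMeasurable
      (c := C) (ae_of_all _ fun x => by simpa [Real.norm_eq_abs] using hC x)
    simpa [mul_comm] using this
  set s : ℤ → Set ℝ :=
    fun k => Ioc (-Real.pi + k • (2*Real.pi)) (-Real.pi + (k+1) • (2*Real.pi)) with hs
  have hU : ⋃ k : ℤ, s k = univ := iUnion_Ioc_add_zsmul Real.two_pi_pos (-Real.pi)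
  have hsum : HasSum (fun k : ℤ => ∫ x in s k, gaussDens v (x - m') * g x)
      (∫ x : ℝ, gaussDens v (x - m') * g x) := by
    have h := hasSum_integral_iUnion (μ := volume) (fun k : ℤ => measurableSet_Ioc)
      (pairwise_disjoint_Ioc_add_zsmul (-Real.pi) (2*Real.pi))
      (by rw [hU]; exact hh.integrableOn)
    rwa [hU, Measure.restrict_univ] at h
  have hterm : ∀ k : ℤ, (∫ x in s k, gaussDens v (x - m') * g x)
      = ∫ θ in Ioc (-Real.pi) Real.pi,
          gaussDens v (θ - m' + 2*(k:ℝ)*Real.pi) * g θ := by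
    intro k
    have e0 : -Real.pi + (k+1) • (2*Real.pi) = Real.pi + k • (2*Real.pi) := by
      push_cast [zsmul_eq_mul]; ring
    have e1 : -Real.pi + k • (2*Real.pi) ≤ -Real.pi + (k+1) • (2*Real.pi) := by
      rw [e0]; push_cast [zsmul_eq_mul]; nlinarith [Real.pi_pos]
    have e2 := intervalIntegral.integral_comp_add_right (a := -Real.pi) (b := Real.pi)
      (fun x => gaussDens v (x - m') * g x) (k • (2*Real.pi))
    rw [hs]
    simp only []
    rw [← intervalIntegral.integral_of_le e1, e0, ← e2,
      intervalIntegral.integral_of_le (by linarith [Real.pi_pos] : -Real.pi ≤ Real.pi)]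
    apply setIntegral_congr_fun measurableSet_Ioc
    intro θ _
    have ha : θ + k • (2*Real.pi) - m' = θ - m' + 2*(k:ℝ)*Real.pi := by
      push_cast [zsmul_eq_mul]; ring
    simp only [ha, (hg_per.zsmul k) θ]
  have hint : ∀ k : ℤ, IntegrableOn
      (fun θ => gaussDens v (θ - m' + 2*(k:ℝ)*Real.pi) * g θ) (Ioc (-Real.pi) Real.pi) :=
    fun k => Continuous.integrableOn_Ioc
      (((continuous_gaussDens v).comp (by fun_prop)).mul hg_cont)
  set K : ℝ := (Real.sqrt (2 * Real.pi * v))⁻¹ * Real.exp (v/2 + (Real.pi + |m'|)) * C with hK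
  have hK0 : 0 ≤ K := by positivity
  have hptbd : ∀ (k : ℤ), ∀ θ ∈ Ioc (-Real.pi) Real.pi,
      ‖gaussDens v (θ - m' + 2*(k:ℝ)*Real.pi) * g θ‖ ≤ K * Real.exp (-|(k:ℝ)|) := by
    intro k θ hθ
    have habs : |θ - m'| ≤ Real.pi + |m'| := by
      have h1 : |θ| ≤ Real.pi := abs_le.2 ⟨hθ.1.le, hθ.2⟩
      calc |θ - m'| ≤ |θ| + |m'| := abs_sub _ _
        _ ≤ Real.pi + |m'| := by linarith
    have h2 := gaussDens_le hv (θ - m') k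
    have h3 : (Real.sqrt (2 * Real.pi * v))⁻¹ * Real.exp (v/2 + |θ - m'|)
        ≤ (Real.sqrt (2 * Real.pi * v))⁻¹ * Real.exp (v/2 + (Real.pi + |m'|)) := by
      apply mul_le_mul_of_nonneg_left _ (by positivity)
      exact Real.exp_le_exp.2 (by linarith)
    rw [Real.norm_eq_abs, abs_mul, abs_of_nonneg (gaussDens_nonneg _ _)]
    calc gaussDens v (θ - m' + 2*(k:ℝ)*Real.pi) * |g θ|
        ≤ ((Real.sqrt (2 * Real.pi * v))⁻¹ * Real.exp (v/2 + (Real.pi + |m'|))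
            * Real.exp (-|(k:ℝ)|)) * C := by
          apply mul_le_mul _ (hC θ) (abs_nonneg _) (by positivity)
          exact h2.trans (mul_le_mul_of_nonneg_right h3 (Real.exp_pos _).le)
      _ = K * Real.exp (-|(k:ℝ)|) := by rw [hK]; ring
  have hsummable : Summable (fun k : ℤ =>
      ∫ θ in Ioc (-Real.pi) Real.pi, ‖gaussDens v (θ - m' + 2*(k:ℝ)*Real.pi) * g θ‖) := by
    apply Summable.of_nonneg_of_le
      (fun k => integral_nonneg fun θ => norm_nonneg _)
      (fun k => ?_) (summable_exp_neg_abs_int.mul_left (2 * Real.pi * K))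
    have hb : ∀ θ ∈ Ioc (-Real.pi) Real.pi,
        ‖gaussDens v (θ - m' + 2*(k:ℝ)*Real.pi) * g θ‖ ≤ K * Real.exp (-|(k:ℝ)|) :=
      hptbd k
    calc (∫ θ in Ioc (-Real.pi) Real.pi, ‖gaussDens v (θ - m' + 2*(k:ℝ)*Real.pi) * g θ‖)
        ≤ ∫ _ in Ioc (-Real.pi) Real.pi, K * Real.exp (-|(k:ℝ)|) := by
          apply setIntegral_mono_on ((hint k).norm)
            (integrableOn_const measure_Ioc_lt_top.ne) measurableSet_Ioc hb
      _ = 2 * Real.pi * K * Real.exp (-|(k:ℝ)|) := by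
          rw [setIntegral_const, Real.volume_real_Ioc, smul_eq_mul,
            max_eq_left (by linarith [Real.pi_pos])]
          ring
  have hswap := MeasureTheory.integral_tsum_of_summable_integral_norm
    (μ := volume.restrict (Ioc (-Real.pi) Real.pi))
    (F := fun (k : ℤ) θ => gaussDens v (θ - m' + 2*(k:ℝ)*Real.pi) * g θ) hint hsummable
  have hpt : ∀ θ, fWN m' v θ * g θ
      = ∑' k : ℤ, gaussDens v (θ - m' + 2*(k:ℝ)*Real.pi) * g θ :=
    fun θ => (tsum_mul_right).symm
  calc ∫ θ in Ioc (-Real.pi) Real.pi, fWN m' v θ * g θ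
      = ∫ θ in Ioc (-Real.pi) Real.pi,
          ∑' k : ℤ, gaussDens v (θ - m' + 2*(k:ℝ)*Real.pi) * g θ := by simp only [hpt]
    _ = ∑' k : ℤ, ∫ θ in Ioc (-Real.pi) Real.pi,
          gaussDens v (θ - m' + 2*(k:ℝ)*Real.pi) * g θ := hswap.symm
    _ = ∑' k : ℤ, ∫ x in s k, gaussDens v (x - m') * g x :=
        tsum_congr fun k => (hterm k).symm
    _ = ∫ x : ℝ, gaussDens v (x - m') * g x := hsum.tsum_eq
    _ = ∫ z : ℝ, gaussDens 1 z * g (m' + Real.sqrt v * z) := gauss_integral_scale hv m' g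

lemma J_abs_le (m' v : ℝ) (g : ℝ → ℝ) (C : ℝ) (hC : ∀ x, |g x| ≤ C) :
    |∫ z : ℝ, gaussDens 1 z * g (m' + Real.sqrt v * z)| ≤ C := by
  have h1 : |∫ z : ℝ, gaussDens 1 z * g (m' + Real.sqrt v * z)|
      ≤ ∫ z : ℝ, |gaussDens 1 z * g (m' + Real.sqrt v * z)| := by
    simpa [Real.norm_eq_abs, abs_mul] using norm_integral_le_integral_norm
      (μ := volume) (fun z : ℝ => gaussDens 1 z * g (m' + Real.sqrt v * z))
  have h2 : (∫ z : ℝ, |gaussDens 1 z * g (m' + Real.sqrt v * z)|)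
      ≤ ∫ z : ℝ, C * gaussDens 1 z := by
    apply integral_mono_of_nonneg (ae_of_all _ fun z => abs_nonneg _)
      ((integrable_gaussDens one_pos).const_mul C)
    apply ae_of_all
    intro z
    simp only []
    rw [abs_mul, abs_of_nonneg (gaussDens_nonneg _ _)]
    exact mul_le_mul_of_nonneg_left (hC _) (gaussDens_nonneg _ _) |>.trans
      (le_of_eq (mul_comm _ _))
  have h3 : (∫ z : ℝ, C * gaussDens 1 z) = C := by
    rw [MeasureTheory.integral_const_mul, integral_gaussDens one_pos, mul_one]
  linarith

lemma inner_tendsto (α μ σ : ℝ) (hα : 0 < α) (hσ : 0 < σ) (θs : ℝ) (m : ℤ)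
    (g : ℝ → ℝ) (hg_cont : Continuous g) (C : ℝ) (hC : ∀ x, |g x| ≤ C)
    (hg_per : Function.Periodic g (2 * Real.pi)) :
    Filter.Tendsto (fun t : ℝ => ∫ z : ℝ, gaussDens 1 z *
        g (wouMean α μ t m θs + Real.sqrt (wouVar α σ t) * z))
      (nhdsWithin 0 (Set.Ioi 0)) (nhds (g θs)) := by
  have hgval : g (θs + 2 * (m : ℝ) * Real.pi) = g θs := by
    have := (hg_per.zsmul m) θs
    rw [← this]
    congr 1
    push_cast [zsmul_eq_mul]; ring
  have hlim_val : (∫ z : ℝ, gaussDens 1 z * g (θs + 2 * (m : ℝ) * Real.pi)) = g θs := by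
    rw [MeasureTheory.integral_mul_const, integral_gaussDens one_pos, one_mul, hgval]
  rw [← hlim_val]
  have hmean : Filter.Tendsto (fun t : ℝ => wouMean α μ t m θs) (nhdsWithin 0 (Set.Ioi 0))
      (nhds (θs + 2 * (m : ℝ) * Real.pi)) := by
    have hc : Continuous fun t : ℝ =>
        μ + Real.exp (-(α * t)) * (θs - μ + 2 * (m : ℝ) * Real.pi) := by fun_prop
    have h := (hc.tendsto 0).mono_left (nhdsWithin_le_nhds (s := Set.Ioi (0:ℝ)))
    simp only [mul_zero, neg_zero, Real.exp_zero, one_mul] at h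
    have he : μ + (θs - μ + 2 * (m : ℝ) * Real.pi) = θs + 2 * (m : ℝ) * Real.pi := by ring
    rw [he] at h
    exact h
  have hvar : Filter.Tendsto (fun t : ℝ => Real.sqrt (wouVar α σ t))
      (nhdsWithin 0 (Set.Ioi 0)) (nhds 0) := by
    have hc : Continuous fun t : ℝ =>
        Real.sqrt (σ ^ 2 * (1 - Real.exp (-(2 * α * t))) / (2 * α)) := by fun_prop
    have h := (hc.tendsto 0).mono_left (nhdsWithin_le_nhds (s := Set.Ioi (0:ℝ)))
    simp only [mul_zero, neg_zero, Real.exp_zero, sub_self, mul_zero, zero_div,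
      Real.sqrt_zero] at h
    exact h
  have hC0 : 0 ≤ C := (abs_nonneg _).trans (hC 0)
  apply tendsto_integral_filter_of_dominated_convergence (bound := fun z => C * gaussDens 1 z)
  · filter_upwards with t
    exact ((continuous_gaussDens 1).mul (hg_cont.comp (by fun_prop))).aestronglyMeasurable
  · filter_upwards with t
    apply ae_of_all
    intro z
    rw [Real.norm_eq_abs, abs_mul, abs_of_nonneg (gaussDens_nonneg _ _), mul_comm C]
    exact mul_le_mul_of_nonneg_left (hC _) (gaussDens_nonneg _ _)
  · exact (integrable_gaussDens one_pos).const_mul C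
  · apply ae_of_all
    intro z
    apply Filter.Tendsto.const_mul
    have harg : Filter.Tendsto
        (fun t : ℝ => wouMean α μ t m θs + Real.sqrt (wouVar α σ t) * z)
        (nhdsWithin 0 (Set.Ioi 0)) (nhds (θs + 2 * (m : ℝ) * Real.pi)) := by
      have := hmean.add (hvar.mul_const z)
      simpa using this
    exact (hg_cont.tendsto _).comp harg

/-- Point-mass limit: the WOU conditional density concentrates at `θ_s` as
`t → 0⁺`, tested against bounded continuous `2π`-periodic functions. -/
theorem pWOU_tendsto_point_mass (α μ σ : ℝ) (hα : 0 < α) (hσ : 0 < σ)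
    (θs : ℝ) (g : ℝ → ℝ) (hg_cont : Continuous g)
    (hg_bdd : ∃ C : ℝ, ∀ x : ℝ, |g x| ≤ C)
    (hg_per : ∀ x : ℝ, g (x + 2 * Real.pi) = g x) :
    Filter.Tendsto (fun t : ℝ => ∫ θ in (-Real.pi)..Real.pi, pWOU α μ σ t θ θs * g θ)
      (nhdsWithin 0 (Set.Ioi 0)) (nhds (g θs)) := by
  obtain ⟨C, hC⟩ := hg_bdd
  have hC0 : 0 ≤ C := (abs_nonneg _).trans (hC 0)
  have hper : Function.Periodic g (2 * Real.pi) := hg_per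
  have hw0 : ∀ m : ℤ, 0 ≤ wnWeight α μ σ m θs := fun m => wnWeight_nonneg hα hσ μ m θs
  have hwsum : Summable (fun m : ℤ => wnWeight α μ σ m θs) := summable_wnWeight hα hσ μ θs
  have hSconst : (0:ℝ) ≤ ∑' k : ℤ, Real.exp (-|(k : ℝ)|) :=
    tsum_nonneg fun k => (Real.exp_pos _).le
  -- the auxiliary family and its limit
  set Φ : ℝ → ℝ := fun t => ∑' m : ℤ, wnWeight α μ σ m θs *
      ∫ z : ℝ, gaussDens 1 z * g (wouMean α μ t m θs + Real.sqrt (wouVar α σ t) * z) with hΦ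
  have hmain : Filter.Tendsto Φ (nhdsWithin 0 (Set.Ioi 0))
      (nhds (∑' m : ℤ, wnWeight α μ σ m θs * g θs)) := by
    have h := tendsto_tsum_of_dominated_convergence
      (𝓕 := nhdsWithin 0 (Set.Ioi 0))
      (f := fun (t : ℝ) (m : ℤ) => wnWeight α μ σ m θs *
        ∫ z : ℝ, gaussDens 1 z * g (wouMean α μ t m θs + Real.sqrt (wouVar α σ t) * z))
      (g := fun m : ℤ => wnWeight α μ σ m θs * g θs)
      (bound := fun m : ℤ => wnWeight α μ σ m θs * C)
      (hwsum.mul_right C)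
      (fun m => (inner_tendsto α μ σ hα hσ θs m g hg_cont C hC hper).const_mul _)
      (by
        filter_upwards with t
        intro m
        rw [Real.norm_eq_abs, abs_mul, abs_of_nonneg (hw0 m)]
        exact mul_le_mul_of_nonneg_left (J_abs_le _ _ g C hC) (hw0 m))
    exact h
  have hval : (∑' m : ℤ, wnWeight α μ σ m θs * g θs) = g θs := by
    rw [tsum_mul_right, tsum_wnWeight hα hσ, one_mul]
  rw [hval] at hmain
  apply Filter.Tendsto.congr' _ hmain
  filter_upwards [self_mem_nhdsWithin] with t ht
  have hγ : 0 < wouVar α σ t := by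
    have h1 : Real.exp (-(2*α*t)) < 1 := by
      have := Real.exp_lt_exp.2 (show -(2*α*t) < 0 by
        have : (0:ℝ) < t := ht
        nlinarith)
      simpa [Real.exp_zero] using this
    unfold wouVar
    apply div_pos (mul_pos (pow_pos hσ 2) (by linarith)) (by positivity)
  rw [intervalIntegral.integral_of_le (by linarith [Real.pi_pos] : -Real.pi ≤ Real.pi)]
  -- integrability on Ioc of each fWN * g
  have hfg_int : ∀ m' : ℝ, IntegrableOn
      (fun θ => fWN m' (wouVar α σ t) θ * g θ) (Ioc (-Real.pi) Real.pi) := by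
    intro m'
    set B : ℝ := (Real.sqrt (2 * Real.pi * (wouVar α σ t)))⁻¹ *
      Real.exp ((wouVar α σ t)/2 + (Real.pi + |m'|)) *
      (∑' k : ℤ, Real.exp (-|(k : ℝ)|)) * C with hB
    apply Integrable.mono' (integrable_const B)
      (((measurable_fWN hγ m').mul hg_cont.measurable).aestronglyMeasurable)
    rw [ae_restrict_iff' measurableSet_Ioc]
    apply ae_of_all
    intro θ hθ
    have habs : |θ - m'| ≤ Real.pi + |m'| := by
      have h1 : |θ| ≤ Real.pi := abs_le.2 ⟨hθ.1.le, hθ.2⟩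
      calc |θ - m'| ≤ |θ| + |m'| := abs_sub _ _
        _ ≤ Real.pi + |m'| := by linarith
    rw [Real.norm_eq_abs, Pi.mul_apply, abs_mul, abs_of_nonneg (fWN_nonneg _ _ _)]
    calc fWN m' (wouVar α σ t) θ * |g θ|
        ≤ ((Real.sqrt (2 * Real.pi * (wouVar α σ t)))⁻¹ *
            Real.exp ((wouVar α σ t)/2 + (Real.pi + |m'|)) *
            (∑' k : ℤ, Real.exp (-|(k : ℝ)|))) * C := by
          apply mul_le_mul _ (hC θ) (abs_nonneg _) (by positivity)
          refine (fWN_le hγ m' θ).trans ?_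
          apply mul_le_mul_of_nonneg_right _ hSconst
          apply mul_le_mul_of_nonneg_left _ (by positivity)
          exact Real.exp_le_exp.2 (by linarith)
      _ = B := by rw [hB]
  -- each norm-integral is at most C
  have hnorm_le : ∀ m : ℤ, (∫ θ in Ioc (-Real.pi) Real.pi,
      ‖fWN (wouMean α μ t m θs) (wouVar α σ t) θ * g θ‖) ≤ C := by
    intro m
    have habs_eq : ∀ θ : ℝ, ‖fWN (wouMean α μ t m θs) (wouVar α σ t) θ * g θ‖
        = fWN (wouMean α μ t m θs) (wouVar α σ t) θ * |g θ| := fun θ => by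
      rw [Real.norm_eq_abs, abs_mul, abs_of_nonneg (fWN_nonneg _ _ _)]
    have hkey := fWN_integral_eq hγ (wouMean α μ t m θs) (fun x => |g x|) hg_cont.abs C
      (fun x => by rw [abs_abs]; exact hC x)
      (fun x => by simp only [hper x])
    simp only [habs_eq]
    rw [hkey]
    have h1 : (0:ℝ) ≤ ∫ z : ℝ, gaussDens 1 z *
        |g (wouMean α μ t m θs + Real.sqrt (wouVar α σ t) * z)| :=
      integral_nonneg fun z => mul_nonneg (gaussDens_nonneg _ _) (abs_nonneg _)
    have h2 := J_abs_le (wouMean α μ t m θs) (wouVar α σ t) (fun x => |g x|) C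
      (fun x => by rw [abs_abs]; exact hC x)
    rw [abs_of_nonneg h1] at h2
    exact h2
  -- the swap
  have hswap := MeasureTheory.integral_tsum_of_summable_integral_norm
    (μ := volume.restrict (Ioc (-Real.pi) Real.pi))
    (F := fun (m : ℤ) θ => wnWeight α μ σ m θs *
      (fWN (wouMean α μ t m θs) (wouVar α σ t) θ * g θ))
    (fun m => (hfg_int (wouMean α μ t m θs)).const_mul _)
    (by
      apply Summable.of_nonneg_of_le (fun m => integral_nonneg fun θ => norm_nonneg _)
        _ (hwsum.mul_right C)
      intro m
      have : ∀ θ : ℝ, ‖wnWeight α μ σ m θs *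
          (fWN (wouMean α μ t m θs) (wouVar α σ t) θ * g θ)‖
          = wnWeight α μ σ m θs * ‖fWN (wouMean α μ t m θs) (wouVar α σ t) θ * g θ‖ :=
        fun θ => by rw [norm_mul, Real.norm_eq_abs (wnWeight _ _ _ _ _), abs_of_nonneg (hw0 m)]
      simp only [this]
      rw [MeasureTheory.integral_const_mul]
      exact mul_le_mul_of_nonneg_left (hnorm_le m) (hw0 m))
  -- chain of equalities
  calc Φ t
      = ∑' m : ℤ, wnWeight α μ σ m θs * ∫ θ in Ioc (-Real.pi) Real.pi,
          fWN (wouMean α μ t m θs) (wouVar α σ t) θ * g θ := by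
        rw [hΦ]
        exact tsum_congr fun m => by
          rw [fWN_integral_eq hγ (wouMean α μ t m θs) g hg_cont C hC hper]
    _ = ∑' m : ℤ, ∫ θ in Ioc (-Real.pi) Real.pi, wnWeight α μ σ m θs *
          (fWN (wouMean α μ t m θs) (wouVar α σ t) θ * g θ) :=
        tsum_congr fun m => (MeasureTheory.integral_const_mul _ _).symm
    _ = ∫ θ in Ioc (-Real.pi) Real.pi, ∑' m : ℤ, wnWeight α μ σ m θs *
          (fWN (wouMean α μ t m θs) (wouVar α σ t) θ * g θ) := hswap
    _ = ∫ θ in Ioc (-Real.pi) Real.pi, pWOU α μ σ t θ θs * g θ := by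
        apply setIntegral_congr_fun measurableSet_Ioc
        intro θ _
        show (∑' m : ℤ, wnWeight α μ σ m θs *
            (fWN (wouMean α μ t m θs) (wouVar α σ t) θ * g θ))
          = pWOU α μ σ t θ θs * g θ
        have hp : pWOU α μ σ t θ θs = ∑' m : ℤ, wnWeight α μ σ m θs *
            fWN (wouMean α μ t m θs) (wouVar α σ t) θ := rfl
        rw [hp, ← tsum_mul_right]
        exact tsum_congr fun m => (mul_assoc _ _ _).symm
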